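/- arXiv:2501.13854 — 2 statements merged into one kernel-verified Lean document; each statement's English description precedes it below -/
import Mathlib

section
/- If A is a zero-stable square real matrix, then there exists M > 0 such that the operator norm of exp(tA) is bounded by M for all t ≥ 0. -/
open scoped Matrix
attribute [local instance] Matrix.linftyOpNormedRing Matrix.linftyOpNormedAlgebra

open Polynomial

section ZeroStableAux

lemma zs_eval_charpoly {n : ℕ} (B : Matrix (Fin n) (Fin n) ℂ) (ξ : ℂ) :
    (Matrix.charpoly B).eval ξ = (Matrix.scalar (Fin n) ξ - B).det := by
  rw [Matrix.charpoly, eval_det, Matrix.matPolyEquiv_charmatrix]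
  simp

lemma zs_mem_spectrum_iff_isRoot {n : ℕ} (B : Matrix (Fin n) (Fin n) ℂ) (ξ : ℂ) :
    ξ ∈ spectrum ℂ B ↔ (Matrix.charpoly B).IsRoot ξ := by
  rw [spectrum.mem_iff, Polynomial.IsRoot, zs_eval_charpoly, Matrix.isUnit_iff_isUnit_det,
    isUnit_iff_ne_zero, not_not]
  rfl

lemma zs_cexp_hasDerivAt (ξ : ℂ) (t : ℝ) :
    HasDerivAt (fun s : ℝ => Complex.exp (-(ξ * s))) (-ξ * Complex.exp (-(ξ * t))) t := by
  have h1 : HasDerivAt (fun z : ℂ => Complex.exp (-(ξ * z))) (-ξ * Complex.exp (-(ξ * t))) (t : ℂ) := by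
    have h0 : HasDerivAt (fun z : ℂ => -(ξ * z)) (-ξ) (t : ℂ) := by
      simpa using ((hasDerivAt_id (t : ℂ)).const_mul ξ).fun_neg
    simpa [mul_comm] using h0.cexp
  exact h1.comp_ofReal

lemma zs_ode_bound {𝔸 : Type*} [NormedRing 𝔸] [NormedAlgebra ℂ 𝔸] [CompleteSpace 𝔸]
    (g h : ℝ → 𝔸) (ξ : ℂ) (hξ : ξ.re < 0) (K : ℝ)
    (hg : ∀ t : ℝ, HasDerivAt g (ξ • g t + h t) t)
    (hh : Continuous h) (hK : ∀ t : ℝ, 0 ≤ t → ‖h t‖ ≤ K) :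
    ∀ t : ℝ, 0 ≤ t → ‖g t‖ ≤ ‖g 0‖ + K / (-ξ.re) := by
  set a : ℝ := -ξ.re with ha
  have ha0 : 0 < a := by simp only [ha]; linarith
  have hK0 : 0 ≤ K := le_trans (norm_nonneg _) (hK 0 le_rfl)
  set u : ℝ → 𝔸 := fun t : ℝ => Complex.exp (-(ξ * t)) • g t with hu_def
  have hu : ∀ t : ℝ, HasDerivAt u (Complex.exp (-(ξ * t)) • h t) t := by
    intro t
    have h2 := (zs_cexp_hasDerivAt ξ t).fun_smul (hg t)
    convert h2 using 1
    · rfl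
    simp only [smul_add, smul_smul]
    have hc : (Complex.exp (-(ξ * t)) * ξ) • g t + (-ξ * Complex.exp (-(ξ * t))) • g t = 0 := by
      rw [← add_smul]
      have : Complex.exp (-(ξ * t)) * ξ + -ξ * Complex.exp (-(ξ * t)) = 0 := by ring
      rw [this, zero_smul]
    rw [add_right_comm, hc, zero_add]
  have habs : ∀ s : ℝ, ‖Complex.exp (-(ξ * s))‖ = Real.exp (a * s) := by
    intro s
    rw [Complex.norm_exp]
    congr 1
    simp only [Complex.neg_re, Complex.mul_re, Complex.ofReal_re, Complex.ofReal_im, ha]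
    ring
  intro t ht
  have hcont : Continuous fun s : ℝ => Complex.exp (-(ξ * s)) • h s :=
    (Complex.continuous_exp.comp (by fun_prop)).smul hh
  have hint : u t - u 0 = ∫ s in (0:ℝ)..t, Complex.exp (-(ξ * s)) • h s :=
    (intervalIntegral.integral_eq_sub_of_hasDerivAt (fun s _ => hu s)
      (hcont.intervalIntegrable 0 t)).symm
  have hexpint : ∫ s in (0:ℝ)..t, K * Real.exp (a * s) = K / a * (Real.exp (a * t) - 1) := by
    rw [intervalIntegral.integral_const_mul]
    have hF : ∀ s : ℝ, HasDerivAt (fun s : ℝ => Real.exp (a * s) / a) (Real.exp (a * s)) s := by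
      intro s
      have h1 : HasDerivAt (fun s : ℝ => a * s) a s := by
        simpa [mul_comm] using (hasDerivAt_id s).const_mul a
      have h2 := (Real.hasDerivAt_exp (a * s)).comp s h1
      have h3 := h2.div_const a
      simpa [mul_div_assoc, mul_div_cancel_right₀ _ ha0.ne'] using h3
    rw [intervalIntegral.integral_eq_sub_of_hasDerivAt (fun s _ => hF s)
      ((by fun_prop : Continuous fun s : ℝ => Real.exp (a * s)).intervalIntegrable 0 t)]
    field_simp
    simp
  have hbound : ‖u t - u 0‖ ≤ K / a * (Real.exp (a * t) - 1) := by
    rw [hint]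
    have h1 : ‖∫ s in (0:ℝ)..t, Complex.exp (-(ξ * s)) • h s‖
        ≤ |∫ s in (0:ℝ)..t, K * Real.exp (a * s)| := by
      apply intervalIntegral.norm_integral_le_abs_of_norm_le
      · filter_upwards [MeasureTheory.ae_restrict_mem measurableSet_uIoc] with s hs
        have hs0 : 0 < s := by
          rcases Set.mem_uIoc.mp hs with h' | h'
          · exact h'.1
          · exact absurd h'.2 (by linarith [h'.1])
        rw [norm_smul, habs]
        calc Real.exp (a * s) * ‖h s‖ ≤ Real.exp (a * s) * K :=
              mul_le_mul_of_nonneg_left (hK s hs0.le) (Real.exp_nonneg _)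
          _ = K * Real.exp (a * s) := mul_comm _ _
      · exact (by fun_prop : Continuous fun s : ℝ => K * Real.exp (a * s)).intervalIntegrable 0 t
    rw [hexpint] at h1
    have h2 : (1:ℝ) ≤ Real.exp (a * t) := Real.one_le_exp_iff.mpr (by positivity)
    rwa [abs_of_nonneg (by nlinarith [div_nonneg hK0 ha0.le])] at h1
  have hu0 : u 0 = g 0 := by simp [hu_def]
  have hgt : g t = Complex.exp (ξ * t) • u t := by
    simp only [hu_def, smul_smul, ← Complex.exp_add]
    rw [show ξ * t + -(ξ * t) = 0 by ring, Complex.exp_zero, one_smul]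
  have hut : ‖u t‖ ≤ ‖g 0‖ + K / a * (Real.exp (a * t) - 1) := by
    have h4 := norm_sub_norm_le (u t) (u 0)
    rw [hu0] at h4 hbound
    linarith
  have hnorm : ‖g t‖ = Real.exp (-(a * t)) * ‖u t‖ := by
    rw [hgt, norm_smul, Complex.norm_exp]
    congr 2
    simp only [Complex.mul_re, Complex.ofReal_re, Complex.ofReal_im, ha]
    ring
  rw [hnorm]
  have he1 : Real.exp (-(a * t)) ≤ 1 := Real.exp_le_one_iff.mpr (by nlinarith)
  have heE : Real.exp (-(a * t)) * Real.exp (a * t) = 1 := by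
    rw [← Real.exp_add]; simp
  have he0 : 0 < Real.exp (-(a * t)) := Real.exp_pos _
  have hg0 : 0 ≤ ‖g 0‖ := norm_nonneg _
  have hKa : 0 ≤ K / a := by positivity
  nlinarith [mul_le_mul_of_nonneg_left hut he0.le]

lemma zs_aeval_comm {n : ℕ} (B : Matrix (Fin n) (Fin n) ℂ) (q : ℂ[X]) :
    (aeval B q) * B = B * (aeval B q) := by
  have h1 : aeval B (q * X) = aeval B q * B := by simp [map_mul]
  have h2 : aeval B (X * q) = B * aeval B q := by simp [map_mul]
  rw [← h1, ← h2, mul_comm q X]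

lemma zs_main_ind {n : ℕ} (B : Matrix (Fin n) (Fin n) ℂ)
    (E : ℝ → Matrix (Fin n) (Fin n) ℂ)
    (hE : ∀ t : ℝ, HasDerivAt E (E t * B) t)
    (hEc : Continuous E)
    (hBE : ∀ t : ℝ, B * E t = E t * B) :
    ∀ s : Multiset ℂ, (∀ ξ ∈ s, ξ.re < 0) →
      (∃ K : ℝ, ∀ t : ℝ, 0 ≤ t →
        ‖(aeval B ((s.map fun ζ => X - Polynomial.C ζ).prod)) * E t‖ ≤ K) →
      ∃ K : ℝ, ∀ t : ℝ, 0 ≤ t → ‖E t‖ ≤ K := by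
  intro s
  induction s using Multiset.induction_on with
  | empty =>
    intro _ hb
    simpa using hb
  | cons ξ s IH =>
    intro hneg hb
    obtain ⟨K, hKb⟩ := hb
    set q : ℂ[X] := (s.map fun ζ => X - Polynomial.C ζ).prod with hq
    have hprod : (((ξ ::ₘ s).map fun ζ => X - Polynomial.C ζ).prod : ℂ[X])
        = (X - Polynomial.C ξ) * q := by
      rw [Multiset.map_cons, Multiset.prod_cons]
    rw [hprod] at hKb
    have e1 : (aeval B) ((X - Polynomial.C ξ) * q)
        = (B - ξ • 1) * aeval B q := by
      rw [map_mul, map_sub, aeval_X, aeval_C, Algebra.algebraMap_eq_smul_one]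
    have hkey : ∀ t : ℝ, aeval B q * (E t * B)
        = ξ • (aeval B q * E t) + (aeval B ((X - Polynomial.C ξ) * q)) * E t := by
      intro t
      rw [e1, ← hBE t, ← mul_assoc, zs_aeval_comm]
      have e2 : B * aeval B q = ξ • (aeval B q) + (B - ξ • 1) * aeval B q := by
        rw [sub_mul, smul_mul_assoc, one_mul]; abel
      rw [e2, add_mul, smul_mul_assoc, mul_assoc]
    have hg : ∀ t : ℝ, HasDerivAt (fun t : ℝ => aeval B q * E t)
        (ξ • (aeval B q * E t) + (aeval B ((X - Polynomial.C ξ) * q)) * E t) t := by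
      intro t
      have hd := (hE t).const_mul (aeval B q)
      rwa [hkey t] at hd
    have hhc : Continuous fun t : ℝ => (aeval B ((X - Polynomial.C ξ) * q)) * E t :=
      continuous_const.mul hEc
    have hbnd := zs_ode_bound _ _ ξ (hneg ξ (Multiset.mem_cons_self ξ s)) K hg hhc hKb
    exact IH (fun ζ hζ => hneg ζ (Multiset.mem_cons_of_mem hζ)) ⟨_, hbnd⟩

end ZeroStableAux

/-- The index of stability: the maximum of the real parts of the (complex) eigenvalues of `A`. -/
noncomputable def specAbscissa {n : ℕ} (A : Matrix (Fin n) (Fin n) ℝ) : ℝ :=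
  sSup (Complex.re '' spectrum ℂ (A.map Complex.ofReal))

/-- A real square matrix is zero-stable if its index of stability is `0`, `0` is the only
eigenvalue with real part `0`, and `0` is a simple eigenvalue (algebraic multiplicity one). -/
def ZeroStable {n : ℕ} (A : Matrix (Fin n) (Fin n) ℝ) : Prop :=
  specAbscissa A = 0 ∧
  (∀ ξ ∈ spectrum ℂ (A.map Complex.ofReal), ξ.re = 0 → ξ = 0) ∧
  (Matrix.charpoly (A.map Complex.ofReal)).rootMultiplicity 0 = 1

theorem stmt_1 {n : ℕ} (A : Matrix (Fin n) (Fin n) ℝ) (hA : ZeroStable A) :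
    ∃ M > (0 : ℝ), ∀ t : ℝ, 0 ≤ t → ‖NormedSpace.exp (t • A)‖ ≤ M := by
  obtain ⟨h1, h2, h3⟩ := hA
  set B : Matrix (Fin n) (Fin n) ℂ := A.map Complex.ofReal with hB
  -- the roots of the characteristic polynomial
  have hmonic : (Matrix.charpoly B).Monic := Matrix.charpoly_monic B
  have hcount : (Matrix.charpoly B).roots.count 0 = 1 := by
    rw [Polynomial.count_roots, h3]
  have hzm : (0 : ℂ) ∈ (Matrix.charpoly B).roots :=
    Multiset.count_pos.mp (by rw [hcount]; norm_num)
  set s : Multiset ℂ := (Matrix.charpoly B).roots.erase 0 with hs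
  have hroots : (Matrix.charpoly B).roots = 0 ::ₘ s := (Multiset.cons_erase hzm).symm
  have hs0 : (0 : ℂ) ∉ s := by
    rw [← Multiset.count_eq_zero, hs, Multiset.count_erase_self, hcount]
  -- spectral facts
  have hfin : (spectrum ℂ B).Finite :=
    (Polynomial.finite_setOf_isRoot hmonic.ne_zero).subset
      (fun x hx => (zs_mem_spectrum_iff_isRoot B x).mp hx)
  have hbdd : BddAbove (Complex.re '' spectrum ℂ B) := (hfin.image _).bddAbove
  have hneg : ∀ ξ ∈ s, ξ.re < 0 := by
    intro ξ hξ
    have hmem : ξ ∈ (Matrix.charpoly B).roots := hroots ▸ Multiset.mem_cons_of_mem hξ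
    have hroot : (Matrix.charpoly B).IsRoot ξ := (Polynomial.mem_roots'.mp hmem).2
    have hspec : ξ ∈ spectrum ℂ B := (zs_mem_spectrum_iff_isRoot B ξ).mpr hroot
    have hle : ξ.re ≤ 0 := by
      have := le_csSup hbdd (Set.mem_image_of_mem Complex.re hspec)
      rwa [show sSup (Complex.re '' spectrum ℂ B) = 0 from h1] at this
    rcases lt_or_eq_of_le hle with h | h
    · exact h
    · exact absurd (h2 ξ hspec h) (fun h0 => hs0 (h0 ▸ hξ))
  -- the exponential flow
  set E : ℝ → Matrix (Fin n) (Fin n) ℂ := fun t => NormedSpace.exp (t • B) with hE_def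
  have hE : ∀ t : ℝ, HasDerivAt E (E t * B) t := fun t => hasDerivAt_exp_smul_const B t
  have hEc : Continuous E :=
    continuous_iff_continuousAt.mpr fun t => (hE t).continuousAt
  have hBE : ∀ t : ℝ, B * E t = E t * B := fun t =>
    (((Commute.refl B).smul_right t).exp_right)
  have hE0 : E 0 = 1 := by
    rw [hE_def]; simp [NormedSpace.exp_zero]
  -- Cayley–Hamilton gives the zero-eigenvalue step
  set q : ℂ[X] := (s.map fun ζ => X - Polynomial.C ζ).prod with hq
  have hcharfact : Matrix.charpoly B = X * q := by
    calc Matrix.charpoly B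
        = (((0 ::ₘ s).map fun ζ => X - Polynomial.C ζ).prod : ℂ[X]) := by
          rw [← hroots]
          exact (IsAlgClosed.splits _).eq_prod_roots_of_monic hmonic
      _ = X * q := by
          rw [Multiset.map_cons, Multiset.prod_cons, Polynomial.C_0, sub_zero]
  have hXq : B * aeval B q = 0 := by
    have : aeval B (X * q) = 0 := by
      rw [← hcharfact]; exact Matrix.aeval_self_charpoly B
    rwa [map_mul, aeval_X] at this
  have hg0 : ∀ t : ℝ, HasDerivAt (fun t : ℝ => aeval B q * E t) 0 t := by
    intro t
    have hd := (hE t).const_mul (aeval B q)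
    have hzero : aeval B q * (E t * B) = 0 := by
      rw [← hBE t, ← mul_assoc, zs_aeval_comm, hXq, zero_mul]
    rwa [hzero] at hd
  have hconst : ∀ t : ℝ, aeval B q * E t = aeval B q := by
    intro t
    have := is_const_of_deriv_eq_zero (f := fun t : ℝ => aeval B q * E t)
      (fun x => (hg0 x).differentiableAt) (fun x => (hg0 x).deriv) t 0
    rwa [hE0, mul_one] at this
  have hbase : ∃ K : ℝ, ∀ t : ℝ, 0 ≤ t → ‖aeval B q * E t‖ ≤ K :=
    ⟨‖aeval B q‖, fun t _ => le_of_eq (by rw [hconst t])⟩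
  obtain ⟨K, hK⟩ := zs_main_ind B E hE hEc hBE s hneg hbase
  -- transfer the bound back to the real exponential
  have hnormmap : ∀ M : Matrix (Fin n) (Fin n) ℝ, ‖M.map Complex.ofReal‖ = ‖M‖ := by
    intro M
    simp [Matrix.linfty_opNorm_def, Matrix.map_apply]
  have hmapexp : ∀ t : ℝ, (NormedSpace.exp (t • A)).map Complex.ofReal = E t := by
    intro t
    have hcont : Continuous fun M : Matrix (Fin n) (Fin n) ℝ => M.map Complex.ofReal :=
      Continuous.matrix_map continuous_id Complex.continuous_ofReal
    have hmap := NormedSpace.map_exp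
      ((Complex.ofRealHom.mapMatrix : Matrix (Fin n) (Fin n) ℝ →+* Matrix (Fin n) (Fin n) ℂ))
      hcont (t • A)
    have hsm : (t • A).map Complex.ofReal = t • B := by
      ext i j
      simp [hB, Matrix.map_apply, Complex.real_smul]
    calc (NormedSpace.exp (t • A)).map Complex.ofReal
        = NormedSpace.exp ((t • A).map Complex.ofReal) := hmap
      _ = E t := by rw [hsm]
  have hK0 : 0 ≤ K := le_trans (norm_nonneg _) (hK 0 le_rfl)
  refine ⟨K + 1, by linarith, fun t ht => ?_⟩
  have : ‖NormedSpace.exp (t • A)‖ = ‖E t‖ := by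
    rw [← hmapexp t, hnormmap]
  rw [this]
  linarith [hK t ht]
end

section
/- Let A ∈ ℝ^{N×N} be zero-stable with Jordan decomposition A = Q J Q^{−1} where the eigenvalue 0 is simple and all other eigenvalues have strictly negative real part. Then lim_{t→∞} e^{tA} = w v^⊤, where w is a right eigenvector and v a left eigenvector of A for the eigenvalue 0, normalized so that v^⊤ w = 1. -/
open scoped Matrix
attribute [local instance] Matrix.linftyOpNormedRing Matrix.linftyOpNormedAlgebra

section Aux

open Polynomial Filter Module NormedSpace Matrix Nat

attribute [local instance] Matrix.linftyOpNormedAddCommGroup Matrix.linftyOpNormedSpace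

variable {n : ℕ}

/-- Any element commutes with a polynomial in itself. -/
lemma commute_aeval_self {R S : Type*} [CommSemiring R] [Semiring S] [Algebra R S]
    (T : S) (q : R[X]) : Commute T (Polynomial.aeval T q) := by
  have h1 : Polynomial.aeval T (X : R[X]) = T := Polynomial.aeval_X T
  show T * _ = _ * T
  calc T * Polynomial.aeval T q = Polynomial.aeval T (X * q) := by
        rw [_root_.map_mul, h1]
    _ = Polynomial.aeval T (q * X) := by rw [mul_comm]
    _ = Polynomial.aeval T q * T := by rw [_root_.map_mul, h1]

/-- absorb: if `X * Y = 0` then `exp X * Y = Y`. -/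
lemma exp_mul_eq_of_mul_eq_zero {X Y : Matrix (Fin n) (Fin n) ℝ} (h : X * Y = 0) :
    NormedSpace.exp X * Y = Y := by
  rw [NormedSpace.exp_eq_tsum ℝ]
  have hs : Summable fun k : ℕ => (k !⁻¹ : ℝ) • X ^ k := NormedSpace.expSeries_summable' X
  rw [← hs.tsum_mul_right Y]
  have hterm : ∀ k : ℕ, k ≠ 0 → ((k !⁻¹ : ℝ) • X ^ k) * Y = 0 := by
    intro k hk
    obtain ⟨m, rfl⟩ := Nat.exists_eq_succ_of_ne_zero hk
    rw [smul_mul_assoc, pow_succ, mul_assoc, h, mul_zero, smul_zero]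
  rw [tsum_eq_single 0 hterm]
  simp

/-- absorb: if `Y * X = 0` then `Y * exp X = Y`. -/
lemma mul_exp_eq_of_mul_eq_zero {X Y : Matrix (Fin n) (Fin n) ℝ} (h : Y * X = 0) :
    Y * NormedSpace.exp X = Y := by
  rw [NormedSpace.exp_eq_tsum ℝ]
  have hs : Summable fun k : ℕ => (k !⁻¹ : ℝ) • X ^ k := NormedSpace.expSeries_summable' X
  rw [← hs.tsum_mul_left Y]
  have hterm : ∀ k : ℕ, k ≠ 0 → Y * ((k !⁻¹ : ℝ) • X ^ k) = 0 := by
    intro k hk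
    obtain ⟨m, rfl⟩ := Nat.exists_eq_succ_of_ne_zero hk
    rw [mul_smul_comm, show X ^ (m+1) = X * X ^ m from pow_succ' X m, ← mul_assoc, h, zero_mul, smul_zero]
  rw [tsum_eq_single 0 hterm]
  simp

lemma mulVec_pow_eig {C : Matrix (Fin n) (Fin n) ℂ} {x : Fin n → ℂ} {μ : ℂ}
    (h : C.mulVec x = μ • x) (k : ℕ) : (C ^ k).mulVec x = μ ^ k • x := by
  induction k with
  | zero => simp [Matrix.one_mulVec]
  | succ m ih =>
      rw [pow_succ, ← Matrix.mulVec_mulVec, h, Matrix.mulVec_smul, ih, smul_smul, pow_succ,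
        mul_comm]

lemma aeval_mulVec_eig {C : Matrix (Fin n) (Fin n) ℂ} {x : Fin n → ℂ} {μ : ℂ}
    (h : C.mulVec x = μ • x) (q : ℝ[X]) :
    (Polynomial.aeval C q).mulVec x = (Polynomial.aeval μ q) • x := by
  induction q using Polynomial.induction_on' with
  | add p q hp hq => rw [map_add, map_add, Matrix.add_mulVec, hp, hq, add_smul]
  | monomial k c =>
      rw [Polynomial.aeval_monomial, Polynomial.aeval_monomial,
        Algebra.algebraMap_eq_smul_one, Algebra.algebraMap_eq_smul_one,
        smul_one_mul, smul_one_mul, Matrix.smul_mulVec, mulVec_pow_eig h]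
      exact (smul_assoc c (μ ^ k) x).symm

lemma exp_mulVec_eig {C : Matrix (Fin n) (Fin n) ℂ} {x : Fin n → ℂ} {μ : ℂ}
    (h : C.mulVec x = μ • x) :
    (NormedSpace.exp C).mulVec x = Complex.exp μ • x := by
  rw [NormedSpace.exp_eq_tsum ℂ]
  -- the linear map `M ↦ M.mulVec x`
  let L : Matrix (Fin n) (Fin n) ℂ →ₗ[ℂ] (Fin n → ℂ) :=
    { toFun := fun M => M.mulVec x
      map_add' := fun a b => Matrix.add_mulVec a b x
      map_smul' := fun c M => by simp [Matrix.smul_mulVec] }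
  have hLcont : Continuous L := L.continuous_of_finiteDimensional
  let L' : Matrix (Fin n) (Fin n) ℂ →L[ℂ] (Fin n → ℂ) := ⟨L, hLcont⟩
  have hs : Summable fun k : ℕ => (k !⁻¹ : ℂ) • C ^ k := NormedSpace.expSeries_summable' C
  have h1 : (∑' k : ℕ, (k !⁻¹ : ℂ) • C ^ k).mulVec x
      = ∑' k : ℕ, ((k !⁻¹ : ℂ) • C ^ k).mulVec x := by
    exact (L'.map_tsum hs)
  rw [h1]
  have h2 : ∀ k : ℕ, ((k !⁻¹ : ℂ) • C ^ k).mulVec x = ((k !⁻¹ : ℂ) * μ ^ k) • x := by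
    intro k
    rw [Matrix.smul_mulVec, mulVec_pow_eig h, smul_smul]
  simp_rw [h2]
  rw [Summable.tsum_smul_const]
  · congr 1
    rw [Complex.exp_eq_exp_ℂ, NormedSpace.exp_eq_tsum ℂ]
    simp_rw [smul_eq_mul]
  · simpa [smul_eq_mul] using NormedSpace.expSeries_summable' (𝕂 := ℂ) μ

lemma matrix_spectrum_finite (C : Matrix (Fin n) (Fin n) ℂ) : (spectrum ℂ C).Finite := by
  have e := AlgEquiv.spectrum_eq (Matrix.toLinAlgEquiv' (R := ℂ) (n := Fin n)) C
  rw [← e]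
  set f := Matrix.toLinAlgEquiv' C with hf
  have hsub : spectrum ℂ f ⊆ {μ | (minpoly ℂ f).IsRoot μ} := by
    intro μ hμ
    exact (Module.End.hasEigenvalue_iff_isRoot).mp
      (Module.End.hasEigenvalue_iff_mem_spectrum.mpr hμ)
  exact (Polynomial.finite_setOf_isRoot (minpoly.ne_zero (LinearMap.isIntegral f))).subset hsub

lemma exists_eigenvector_of_mem_spectrum {C : Matrix (Fin n) (Fin n) ℂ} {μ : ℂ}
    (hμ : μ ∈ spectrum ℂ C) : ∃ x : Fin n → ℂ, x ≠ 0 ∧ C.mulVec x = μ • x := by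
  have e := AlgEquiv.spectrum_eq (Matrix.toLinAlgEquiv' (R := ℂ) (n := Fin n)) C
  rw [← e] at hμ
  have hev : Module.End.HasEigenvalue (Matrix.toLinAlgEquiv' C) μ :=
    Module.End.hasEigenvalue_iff_mem_spectrum.mpr hμ
  obtain ⟨x, hx⟩ := hev.exists_hasEigenvector
  refine ⟨x, hx.2, ?_⟩
  have hmem := Module.End.mem_eigenspace_iff.mp hx.1
  have happ : (Matrix.toLinAlgEquiv' C) x = C.mulVec x := rfl
  rw [happ] at hmem
  exact hmem

lemma mem_spectrum_of_eigenvector {C : Matrix (Fin n) (Fin n) ℂ} {μ : ℂ} {x : Fin n → ℂ}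
    (hx : x ≠ 0) (h : C.mulVec x = μ • x) : μ ∈ spectrum ℂ C := by
  have e := AlgEquiv.spectrum_eq (Matrix.toLinAlgEquiv' (R := ℂ) (n := Fin n)) C
  rw [← e]
  refine Module.End.hasEigenvalue_iff_mem_spectrum.mp ?_
  refine Module.End.hasEigenvalue_of_hasEigenvector ⟨Module.End.mem_eigenspace_iff.mpr ?_, hx⟩
  show (Matrix.toLinAlgEquiv' C) x = μ • x
  have happ : (Matrix.toLinAlgEquiv' C) x = C.mulVec x := rfl
  rw [happ, h]

/-- If all points of the spectrum have norm `< 1`, powers tend to zero in norm. -/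
lemma pow_tendsto_zero_of_spectrum_lt_one {C : Matrix (Fin n) (Fin n) ℂ}
    (h : ∀ μ ∈ spectrum ℂ C, ‖μ‖₊ < 1) :
    Filter.Tendsto (fun k : ℕ => ‖C ^ k‖) Filter.atTop (nhds 0) := by
  classical
  have hfin := matrix_spectrum_finite C
  set s := hfin.toFinset with hs
  set c : NNReal := s.sup (fun μ => ‖μ‖₊) with hc
  have hclt : c < 1 := by
    rw [hc, Finset.sup_lt_iff (by norm_num : (⊥ : NNReal) < 1)]
    intro μ hμ
    exact h μ (hfin.mem_toFinset.mp hμ)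
  have hrad : spectralRadius ℂ C ≤ (c : ENNReal) := by
    rw [spectralRadius]
    refine iSup₂_le fun μ hμ => ?_
    exact_mod_cast ENNReal.coe_le_coe.mpr (Finset.le_sup (hfin.mem_toFinset.mpr hμ))
  set d : NNReal := (c + 1) / 2 with hd
  have hcd : c < d := by
    rw [hd]
    rw [lt_div_iff₀ (by norm_num : (0 : NNReal) < 2)]
    calc c * 2 = c + c := by ring
      _ < c + 1 := by exact add_lt_add_right hclt c
  have hd1 : d < 1 := by
    rw [hd, div_lt_iff₀ (by norm_num : (0 : NNReal) < 2)]
    calc c + 1 < 1 + 1 := add_lt_add_left hclt 1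
      _ = 1 * 2 := by ring
  have hgel := spectrum.pow_nnnorm_pow_one_div_tendsto_nhds_spectralRadius C
  have hlt : spectralRadius ℂ C < (d : ENNReal) := lt_of_le_of_lt hrad (by exact_mod_cast hcd)
  have hev : ∀ᶠ k : ℕ in Filter.atTop, (‖C ^ k‖₊ : ENNReal) ^ (1 / (k : ℝ)) < (d : ENNReal) :=
    hgel.eventually_lt_const hlt
  have hbound : ∀ᶠ k : ℕ in Filter.atTop, ‖C ^ k‖ ≤ (d : ℝ) ^ k := by
    filter_upwards [hev, Filter.eventually_ge_atTop 1] with k hk hk1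
    have hkne : (k : ℝ) ≠ 0 := by positivity
    have h2 : ((‖C ^ k‖₊ : ENNReal) ^ (1 / (k : ℝ))) ^ (k : ℝ) ≤ ((d : ENNReal)) ^ (k : ℝ) := by
      exact ENNReal.rpow_le_rpow hk.le (by positivity)
    rw [← ENNReal.rpow_mul, one_div_mul_cancel hkne, ENNReal.rpow_one] at h2
    have h3 : (‖C ^ k‖₊ : ENNReal) ≤ ((d ^ k : NNReal) : ENNReal) := by
      rw [ENNReal.coe_pow, ← ENNReal.rpow_natCast]
      exact h2
    have h4 : ‖C ^ k‖₊ ≤ d ^ k := by exact_mod_cast h3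
    calc ‖C ^ k‖ = ((‖C ^ k‖₊ : NNReal) : ℝ) := rfl
      _ ≤ ((d ^ k : NNReal) : ℝ) := by exact_mod_cast h4
      _ = (d : ℝ) ^ k := by push_cast; ring
  refine squeeze_zero' (Filter.Eventually.of_forall fun k => norm_nonneg _) hbound ?_
  exact tendsto_pow_atTop_nhds_zero_of_lt_one d.coe_nonneg (by exact_mod_cast hd1)

set_option maxHeartbeats 1000000 in
lemma spec_bound (T : Matrix (Fin n) (Fin n) ℂ) (q u : Polynomial ℝ)
    (habs : sSup (Complex.re '' spectrum ℂ T) = 0)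
    (him : ∀ ξ ∈ spectrum ℂ T, ξ.re = 0 → ξ = 0)
    (hTP : T * (Polynomial.aeval T q) = 0)
    (hI : (Polynomial.aeval T u) * T + (Polynomial.aeval T q) = 1) :
    ∀ μ ∈ spectrum ℂ (NormedSpace.exp T - Polynomial.aeval T q), ‖μ‖₊ < 1 := by
  intro μ hμ
  have hdum : True := trivial
  set P : Matrix (Fin n) (Fin n) ℂ := Polynomial.aeval T q with hP
  by_cases hμ0 : μ = 0
  · simp [hμ0]
  -- an eigenvector of `exp T - P` for `μ`
  obtain ⟨x, hx0, hxeq⟩ := exists_eigenvector_of_mem_spectrum hμ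
  -- the eigenspace is `T`-invariant
  have hcomm : Commute T (NormedSpace.exp T - P) := by
    have h1 : Commute T (NormedSpace.exp T) := (Commute.refl T).exp_right
    have h2 : Commute T P := commute_aeval_self T q
    exact h1.sub_right h2
  set B : Matrix (Fin n) (Fin n) ℂ := NormedSpace.exp T - P - μ • 1 with hB
  have hcommB : Commute T B := by
    refine hcomm.sub_right ?_
    exact (Commute.one_right T).smul_right μ
  set V : Submodule ℂ (Fin n → ℂ) := LinearMap.ker (Matrix.toLin' B) with hV
  have hxV : x ∈ V := by
    rw [hV, LinearMap.mem_ker, Matrix.toLin'_apply, hB, Matrix.sub_mulVec, hxeq,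
      Matrix.smul_mulVec, Matrix.one_mulVec, sub_self]
  have hTV : ∀ y ∈ V, (Matrix.toLin' T) y ∈ V := by
    intro y hy
    rw [hV, LinearMap.mem_ker, Matrix.toLin'_apply] at hy ⊢
    rw [Matrix.toLin'_apply, Matrix.mulVec_mulVec, ← hcommB.eq, ← Matrix.mulVec_mulVec, hy,
      Matrix.mulVec_zero]
  haveI : Nontrivial V := by
    refine ⟨⟨⟨x, hxV⟩, 0, fun hc => hx0 ?_⟩⟩
    exact congrArg Subtype.val hc
  let φV : Module.End ℂ V := (Matrix.toLin' T).restrict hTV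
  obtain ⟨lam, hlam⟩ := Module.End.exists_eigenvalue φV
  obtain ⟨z, hz⟩ := hlam.exists_hasEigenvector
  set y : Fin n → ℂ := (z : Fin n → ℂ) with hy
  have hy0 : y ≠ 0 := fun hc => hz.2 (Subtype.ext hc)
  have hTy : T.mulVec y = lam • y := by
    have h2 := congrArg (Subtype.val) (Module.End.mem_eigenspace_iff.mp hz.1)
    rw [LinearMap.restrict_apply] at h2
    simpa only [Matrix.toLin'_apply, SetLike.val_smul] using h2
  have hyV : y ∈ V := z.2
  have hyB : (NormedSpace.exp T - P).mulVec y = μ • y := by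
    rw [hV, LinearMap.mem_ker, Matrix.toLin'_apply, hB] at hyV
    rw [Matrix.sub_mulVec, Matrix.smul_mulVec, Matrix.one_mulVec, sub_eq_zero] at hyV
    exact hyV
  have hexp_y : (NormedSpace.exp T).mulVec y = Complex.exp lam • y := exp_mulVec_eig hTy
  have hPy : P.mulVec y = (Polynomial.aeval lam q) • y := aeval_mulVec_eig hTy q
  by_cases hlam0 : lam = 0
  · -- then `P y = y` and `B y = 0`, contradicting `μ ≠ 0`
    have hPy1 : P.mulVec y = y := by
      have h2 := congrArg (fun M => M.mulVec y) hI
      simp only [Matrix.add_mulVec, Matrix.one_mulVec] at h2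
      rw [← Matrix.mulVec_mulVec, hTy, hlam0, zero_smul, Matrix.mulVec_zero, zero_add] at h2
      exact h2
    exfalso
    apply hμ0
    have h3 : μ • y = 0 := by
      rw [← hyB, Matrix.sub_mulVec, hexp_y, hPy1, hlam0, Complex.exp_zero, one_smul, sub_self]
    rcases smul_eq_zero.mp h3 with h | h
    · exact h
    · exact absurd h hy0
  · -- then `q(lam) = 0` and `μ = exp lam` with `Re lam < 0`
    have hql : Polynomial.aeval lam q = 0 := by
      have h2 := congrArg (fun M => M.mulVec y) hTP
      simp only [Matrix.zero_mulVec] at h2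
      rw [← Matrix.mulVec_mulVec, hPy, Matrix.mulVec_smul, hTy, smul_smul] at h2
      rcases smul_eq_zero.mp h2 with h | h
      · exact (mul_eq_zero.mp h).resolve_right hlam0
      · exact absurd h hy0
    have hμexp : μ = Complex.exp lam := by
      have h2 : (Complex.exp lam) • y = μ • y := by
        rw [← hexp_y, ← hyB, Matrix.sub_mulVec, hPy, hql, zero_smul, sub_zero]
      have h3 : (Complex.exp lam - μ) • y = 0 := by rw [sub_smul, h2, sub_self]
      rcases smul_eq_zero.mp h3 with h | h
      · exact (sub_eq_zero.mp h).symm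
      · exact absurd h hy0
    have hlam_mem : lam ∈ spectrum ℂ T := mem_spectrum_of_eigenvector hy0 hTy
    have hre_le : lam.re ≤ 0 := by
      rw [← habs]
      refine le_csSup ?_ ⟨lam, hlam_mem, rfl⟩
      exact ((matrix_spectrum_finite T).image Complex.re).bddAbove
    have hre_lt : lam.re < 0 := by
      rcases lt_or_eq_of_le hre_le with h | h
      · exact h
      · exact absurd (him lam hlam_mem h) hlam0
    have : ‖μ‖ < 1 := by
      rw [hμexp, Complex.norm_exp]
      exact Real.exp_lt_one_iff.mpr hre_lt
    have h1 : (‖μ‖₊ : ℝ) < ((1 : NNReal) : ℝ) := by simpa [coe_nnnorm] using this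
    exact_mod_cast h1

lemma poly_facts (A : Matrix (Fin n) (Fin n) ℝ)
    (h : (Matrix.charpoly (A.map Complex.ofReal)).rootMultiplicity 0 = 1) :
    ∃ g u v : ℝ[X], Matrix.charpoly A = X * g ∧ u * X + v * g = 1 ∧
      (Matrix.charpoly A).natTrailingDegree = 1 := by
  set p := Matrix.charpoly A with hpdef
  have hp : p.Monic := A.charpoly_monic
  have hp0 : p ≠ 0 := hp.ne_zero
  have hmap : Matrix.charpoly (A.map Complex.ofReal) = p.map Complex.ofRealHom := by
    exact Matrix.charpoly_map A Complex.ofRealHom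
  have hpC0 : p.map Complex.ofRealHom ≠ 0 := (hp.map Complex.ofRealHom).ne_zero
  rw [hmap] at h
  have hX : (X : ℝ[X]) ∣ p := by
    rw [Polynomial.X_dvd_iff]
    have h1 : (X : ℂ[X]) ∣ p.map Complex.ofRealHom := by
      have h2 := Polynomial.pow_rootMultiplicity_dvd (p.map Complex.ofRealHom) 0
      rw [h] at h2
      simpa using h2
    rw [Polynomial.X_dvd_iff, Polynomial.coeff_map] at h1
    exact Complex.ofReal_eq_zero.mp h1
  have hnot : ¬ ((X : ℝ[X]) ^ 2 ∣ p) := by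
    intro hdvd
    have h2 : (X : ℂ[X]) ^ 2 ∣ p.map Complex.ofRealHom := by
      have h3 := Polynomial.map_dvd (Complex.ofRealHom : ℝ →+* ℂ) hdvd
      simpa using h3
    have h4 : 2 ≤ (p.map Complex.ofRealHom).rootMultiplicity 0 := by
      rw [Polynomial.le_rootMultiplicity_iff hpC0]
      simpa using h2
    omega
  have hrm : p.rootMultiplicity 0 = 1 := by
    refine le_antisymm ?_ ?_
    · rw [Polynomial.rootMultiplicity_le_iff hp0]
      simpa using hnot
    · rw [Polynomial.le_rootMultiplicity_iff hp0]
      simpa using hX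
  have htd : p.natTrailingDegree = 1 := by
    rw [← Polynomial.rootMultiplicity_eq_natTrailingDegree']
    exact hrm
  have hdecomp := Polynomial.pow_mul_divByMonic_rootMultiplicity_eq p 0
  rw [hrm] at hdecomp
  set g := p /ₘ (X - Polynomial.C 0) ^ 1 with hg
  have hpg : p = X * g := by
    conv_lhs => rw [← hdecomp]
    simp
  have hgnd : ¬ (X : ℝ[X]) ∣ g := by
    intro hd
    obtain ⟨c, hc⟩ := hd
    exact hnot ⟨c, by rw [hpg, hc]; ring⟩
  have hco : IsCoprime (X : ℝ[X]) g := (Polynomial.irreducible_X).coprime_iff_not_dvd.mpr hgnd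
  obtain ⟨u, v, huv⟩ := hco
  exact ⟨g, u, v, hpg, huv, htd⟩

end Aux

/-- if `A` is zero-stable then `e^{tA} → w vᵀ` as `t → ∞`, where `w` is a right
eigenvector and `v` a left eigenvector of `A` for the eigenvalue `0`, with `vᵀw = 1`. -/
theorem stmt_13 {n : ℕ} (A : Matrix (Fin n) (Fin n) ℝ) (hA : ZeroStable A) :
    ∃ (w v : Fin n → ℝ), A.mulVec w = 0 ∧ Matrix.vecMul v A = 0 ∧
      dotProduct v w = 1 ∧
      Filter.Tendsto (fun t : ℝ => NormedSpace.exp (t • A)) Filter.atTop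
        (nhds (Matrix.vecMulVec w v)) := by
  classical
  open Polynomial Filter Module NormedSpace in
  obtain ⟨habs, him, hsimple⟩ := hA
  obtain ⟨g, u, vp, hpg, huv, htd⟩ := poly_facts A hsimple
  set P : Matrix (Fin n) (Fin n) ℝ := Polynomial.aeval A (vp * g) with hPdef
  have hCH : Polynomial.aeval A (Matrix.charpoly A) = 0 := A.aeval_self_charpoly
  have hAP : A * P = 0 := by
    have h1 : A * P = Polynomial.aeval A (Polynomial.X * (vp * g)) := by
      rw [map_mul, Polynomial.aeval_X]
    rw [h1, show (Polynomial.X : Polynomial ℝ) * (vp * g) = vp * (Polynomial.X * g) by ring,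
      map_mul, ← hpg, hCH, mul_zero]
  have hPA : P * A = 0 := by
    rw [← (commute_aeval_self A (vp * g)).eq]
    exact hAP
  have hI : Polynomial.aeval A u * A + P = 1 := by
    calc Polynomial.aeval A u * A + P = Polynomial.aeval A (u * Polynomial.X + vp * g) := by
          rw [map_add, map_mul, Polynomial.aeval_X, hPdef]
      _ = 1 := by rw [huv, map_one]
  have hdetA : A.det = 0 := by
    have hc0 : (Matrix.charpoly A).coeff 0 = 0 := by
      rw [hpg, Polynomial.mul_coeff_zero, Polynomial.coeff_X_zero, zero_mul]
    rw [Matrix.det_eq_sign_charpoly_coeff, hc0, mul_zero]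
  have hPne : P ≠ 0 := by
    intro hP0
    rw [hP0, add_zero] at hI
    have hunit : IsUnit A := by
      have h2 : A * Polynomial.aeval A u = 1 := by
        rw [(commute_aeval_self A u).eq]
        exact hI
      exact ⟨⟨A, Polynomial.aeval A u, h2, by rw [← (commute_aeval_self A u).eq]; exact h2⟩, rfl⟩
    exact ((Matrix.isUnit_iff_isUnit_det A).mp hunit).ne_zero hdetA
  -- kernel dimension
  have hker_le : Module.finrank ℝ ↥(LinearMap.ker (Matrix.toLin' A)) ≤ 1 := by
    have h1 := LinearMap.finrank_maxGenEigenspace_zero_eq (Matrix.toLin' A : Module.End ℝ (Fin n → ℝ))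
    have h2 : (Matrix.toLin' A : Module.End ℝ (Fin n → ℝ)).charpoly = Matrix.charpoly A := by
      rw [← LinearMap.charpoly_toMatrix (Matrix.toLin' A) (Pi.basisFun ℝ (Fin n)),
        LinearMap.toMatrix_eq_toMatrix', LinearMap.toMatrix'_toLin']
    rw [h2, htd] at h1
    have h3 : LinearMap.ker (Matrix.toLin' A) ≤
        Module.End.maxGenEigenspace (Matrix.toLin' A : Module.End ℝ (Fin n → ℝ)) 0 := by
      intro x hx
      rw [Module.End.mem_maxGenEigenspace]
      refine ⟨1, ?_⟩
      simpa using LinearMap.mem_ker.mp hx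
    calc Module.finrank ℝ ↥(LinearMap.ker (Matrix.toLin' A))
        ≤ Module.finrank ℝ ↥(Module.End.maxGenEigenspace
            (Matrix.toLin' A : Module.End ℝ (Fin n → ℝ)) 0) := Submodule.finrank_mono h3
      _ = 1 := h1
  -- the right eigenvector `w`
  obtain ⟨i0, j0, hij⟩ : ∃ i0 j0, P i0 j0 ≠ 0 := by
    by_contra hc
    push_neg at hc
    exact hPne (by ext i j; exact hc i j)
  set w : Fin n → ℝ := fun i => P i j0 with hw
  have hw0 : w ≠ 0 := fun hc => hij (congrFun hc i0)
  have hcolker : ∀ j, A.mulVec (fun i => P i j) = 0 := by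
    intro j
    ext i
    have h1 := congrFun (congrFun hAP i) j
    rw [Matrix.mul_apply] at h1
    simpa [Matrix.mulVec, dotProduct] using h1
  have hwker : w ∈ LinearMap.ker (Matrix.toLin' A) := by
    rw [LinearMap.mem_ker, Matrix.toLin'_apply]
    exact hcolker j0
  have hspan : Submodule.span ℝ {w} ≤ LinearMap.ker (Matrix.toLin' A) := by
    rw [Submodule.span_le, Set.singleton_subset_iff]
    exact hwker
  have hkereq : Submodule.span ℝ {w} = LinearMap.ker (Matrix.toLin' A) := by
    refine Submodule.eq_of_le_of_finrank_le hspan ?_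
    rw [finrank_span_singleton hw0]
    exact hker_le
  have hcols : ∀ j, ∃ c : ℝ, (fun i => P i j) = c • w := by
    intro j
    have hmem : (fun i => P i j) ∈ Submodule.span ℝ {w} := by
      rw [hkereq, LinearMap.mem_ker, Matrix.toLin'_apply]
      exact hcolker j
    obtain ⟨c, hc⟩ := Submodule.mem_span_singleton.mp hmem
    exact ⟨c, hc.symm⟩
  choose v hv using hcols
  have hPvw : ∀ i j, P i j = w i * v j := by
    intro i j
    have h1 := congrFun (hv j) i
    simp only [Pi.smul_apply, smul_eq_mul] at h1
    rw [h1, mul_comm]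
  have hvecP : Matrix.vecMulVec w v = P := by
    ext i j
    rw [Matrix.vecMulVec_apply]
    exact (hPvw i j).symm
  have hAw : A.mulVec w = 0 := hcolker j0
  have hPw : P.mulVec w = w := by
    have h2 := congrArg (fun M => M.mulVec w) hI
    simp only [Matrix.add_mulVec, Matrix.one_mulVec] at h2
    rw [← Matrix.mulVec_mulVec, hAw, Matrix.mulVec_zero, zero_add] at h2
    exact h2
  have hwi0 : w i0 ≠ 0 := hij
  have hdot : dotProduct v w = 1 := by
    have h2 := congrFun hPw i0
    have h3 : ∑ j, w i0 * v j * w j = w i0 := by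
      have h4 : P.mulVec w i0 = ∑ j, P i0 j * w j := by
        simp [Matrix.mulVec, dotProduct]
      rw [h4] at h2
      calc ∑ j, w i0 * v j * w j = ∑ j, P i0 j * w j := by
            refine Finset.sum_congr rfl fun j _ => ?_
            rw [hPvw i0 j]
        _ = w i0 := h2
    have h5 : w i0 * dotProduct v w = w i0 * 1 := by
      rw [mul_one, dotProduct, Finset.mul_sum]
      calc ∑ j, w i0 * (v j * w j) = ∑ j, w i0 * v j * w j := by
            refine Finset.sum_congr rfl fun j _ => by ring
        _ = w i0 := h3
    exact mul_left_cancel₀ hwi0 h5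
  have hvA : Matrix.vecMul v A = 0 := by
    ext j
    have h2 := congrFun (congrFun hPA i0) j
    rw [Matrix.mul_apply] at h2
    have h3 : w i0 * (Matrix.vecMul v A j) = 0 := by
      rw [Matrix.vecMul, dotProduct, Finset.mul_sum]
      calc ∑ k, w i0 * (v k * A k j) = ∑ k, P i0 k * A k j := by
            refine Finset.sum_congr rfl fun k _ => ?_
            rw [hPvw i0 k]; ring
        _ = 0 := h2
    have h4 := mul_eq_zero.mp h3
    simpa [hwi0] using h4
  -- the analytic part
  set Eg : ℝ → Matrix (Fin n) (Fin n) ℝ := fun t => NormedSpace.exp (t • A) - P with hEg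
  have habsorb1 : ∀ t : ℝ, NormedSpace.exp (t • A) * P = P := fun t =>
    exp_mul_eq_of_mul_eq_zero (by rw [smul_mul_assoc, hAP, smul_zero])
  have habsorb2 : ∀ t : ℝ, P * NormedSpace.exp (t • A) = P := fun t =>
    mul_exp_eq_of_mul_eq_zero (by rw [mul_smul_comm, hPA, smul_zero])
  have hcommP : P * Polynomial.aeval A u = Polynomial.aeval A u * P := by
    rw [hPdef, ← map_mul, ← map_mul, mul_comm]
  have hPP : P * P = P := by
    have hPeq : P = 1 - Polynomial.aeval A u * A := by
      rw [← hI]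
      exact (add_sub_cancel_left _ _).symm
    calc P * P = P * (1 - Polynomial.aeval A u * A) := by rw [← hPeq]
      _ = P - P * Polynomial.aeval A u * A := by rw [mul_sub, mul_one, mul_assoc]
      _ = P - Polynomial.aeval A u * (P * A) := by rw [hcommP, mul_assoc]
      _ = P := by rw [hPA, mul_zero, sub_zero]
  have hsemi : ∀ t s : ℝ, Eg (t + s) = Eg t * Eg s := by
    intro t s
    have hadd : NormedSpace.exp ((t + s) • A)
        = NormedSpace.exp (t • A) * NormedSpace.exp (s • A) := by
      rw [add_smul]
      exact NormedSpace.exp_add_of_commute (((Commute.refl A).smul_left t).smul_right s)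
    have hexpand : (NormedSpace.exp (t • A) - P) * (NormedSpace.exp (s • A) - P)
        = NormedSpace.exp (t • A) * NormedSpace.exp (s • A)
          - NormedSpace.exp (t • A) * P - P * NormedSpace.exp (s • A) + P * P := by
      noncomm_ring
    show NormedSpace.exp ((t + s) • A) - P
        = (NormedSpace.exp (t • A) - P) * (NormedSpace.exp (s • A) - P)
    rw [hexpand, habsorb1, habsorb2, hPP, hadd]
    abel
  have hEk : ∀ (k : ℕ) (s : ℝ), Eg ((k : ℝ) + s) = (Eg 1) ^ k * Eg s := by
    intro k
    induction k with
    | zero => intro s; simp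
    | succ m ih =>
        intro s
        have h1 : ((m + 1 : ℕ) : ℝ) + s = 1 + ((m : ℝ) + s) := by push_cast; ring
        rw [h1, hsemi, ih, pow_succ']
        rw [mul_assoc]
  have hcont : Continuous Eg := by
    refine Continuous.sub ?_ continuous_const
    exact NormedSpace.exp_continuous.comp (continuous_id.smul continuous_const)
  obtain ⟨Cb, hCb⟩ :=
    (isCompact_Icc (a := (0 : ℝ)) (b := 1)).exists_bound_of_continuousOn hcont.continuousOn
  -- decay of powers via complexification
  set T : Matrix (Fin n) (Fin n) ℂ := A.map Complex.ofReal with hT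
  have hpow : Filter.Tendsto (fun k : ℕ => ‖(Eg 1) ^ k‖) Filter.atTop (nhds 0) := by
    set F : Matrix (Fin n) (Fin n) ℝ →ₐ[ℝ] Matrix (Fin n) (Fin n) ℂ :=
      (Complex.ofRealAm.mapMatrix : Matrix (Fin n) (Fin n) ℝ →ₐ[ℝ] Matrix (Fin n) (Fin n) ℂ)
      with hF
    have hFapp : ∀ X : Matrix (Fin n) (Fin n) ℝ, F X = X.map Complex.ofReal := by
      intro X
      rw [hF, AlgHom.mapMatrix_apply, Complex.ofRealAm_coe]
    have hFnn : ∀ X : Matrix (Fin n) (Fin n) ℝ, ‖F X‖₊ = ‖X‖₊ := by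
      intro X
      rw [hFapp, Matrix.linfty_opNNNorm_def, Matrix.linfty_opNNNorm_def]
      congr 1
      funext i
      refine Finset.sum_congr rfl fun j _ => ?_
      simp [Matrix.map_apply]
    have hFnorm : ∀ X : Matrix (Fin n) (Fin n) ℝ, ‖F X‖ = ‖X‖ := by
      intro X
      rw [← coe_nnnorm, ← coe_nnnorm, hFnn]
    have hFcont : Continuous F :=
      AddMonoidHomClass.continuous_of_bound F 1 (fun X => by rw [hFnorm, one_mul])
    have hFA : F A = T := hFapp A
    have hFaeval : ∀ q : Polynomial ℝ, F (Polynomial.aeval A q) = Polynomial.aeval T q := by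
      intro q
      rw [← hFA]
      exact (Polynomial.aeval_algHom_apply F A q).symm
    have hTP : T * Polynomial.aeval T (vp * g) = 0 := by
      have h1 := congrArg F hAP
      rw [map_mul, map_zero, hFA, hFaeval] at h1
      exact h1
    have hIc : Polynomial.aeval T u * T + Polynomial.aeval T (vp * g) = 1 := by
      have h1 := congrArg F hI
      rw [map_add, map_mul, map_one, hFA, hFaeval, hFaeval] at h1
      exact h1
    have hspec := spec_bound T (vp * g) u habs him hTP hIc
    have hdecayC := pow_tendsto_zero_of_spectrum_lt_one hspec
    have hFE : F (Eg 1) = NormedSpace.exp T - Polynomial.aeval T (vp * g) := by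
      rw [hEg]
      simp only
      have hmx := NormedSpace.map_exp F hFcont A
      rw [hFA] at hmx
      rw [map_sub, one_smul, hFaeval]
      exact congrArg (· - _) hmx
    have hkey : (fun k : ℕ => ‖(Eg 1) ^ k‖)
        = fun k : ℕ => ‖(NormedSpace.exp T - Polynomial.aeval T (vp * g)) ^ k‖ := by
      funext k
      rw [← hFnorm ((Eg 1) ^ k), map_pow, hFE]
    rw [hkey]
    exact hdecayC
  have hfloor : Filter.Tendsto (fun t : ℝ => ‖(Eg 1) ^ (Nat.floor t)‖ * Cb)
      Filter.atTop (nhds 0) := by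
    have h1 := (hpow.comp (tendsto_nat_floor_atTop (α := ℝ))).mul_const Cb
    simpa using h1
  have hEbound : ∀ᶠ t : ℝ in Filter.atTop, ‖Eg t‖ ≤ ‖(Eg 1) ^ (Nat.floor t)‖ * Cb := by
    filter_upwards [Filter.eventually_ge_atTop (0 : ℝ)] with t ht
    have hs1 : t - (Nat.floor t : ℝ) ∈ Set.Icc (0 : ℝ) 1 := by
      constructor
      · exact sub_nonneg.mpr (Nat.floor_le ht)
      · have := (Nat.lt_floor_add_one t).le
        linarith
    have h2 : Eg t = (Eg 1) ^ (Nat.floor t) * Eg (t - (Nat.floor t : ℝ)) := by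
      have ht_eq : t = ((Nat.floor t : ℝ)) + (t - (Nat.floor t : ℝ)) := by ring
      rw [show Eg t = Eg (((Nat.floor t : ℝ)) + (t - (Nat.floor t : ℝ))) by rw [← ht_eq]]
      exact hEk _ _
    rw [h2]
    calc ‖(Eg 1) ^ (Nat.floor t) * Eg (t - (Nat.floor t : ℝ))‖
        ≤ ‖(Eg 1) ^ (Nat.floor t)‖ * ‖Eg (t - (Nat.floor t : ℝ))‖ := norm_mul_le _ _
      _ ≤ ‖(Eg 1) ^ (Nat.floor t)‖ * Cb :=
          mul_le_mul_of_nonneg_left (hCb _ hs1) (norm_nonneg _)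
  have hEtend : Filter.Tendsto (fun t : ℝ => ‖Eg t‖) Filter.atTop (nhds 0) :=
    squeeze_zero' (Filter.Eventually.of_forall fun t => norm_nonneg _) hEbound hfloor
  refine ⟨w, v, hAw, hvA, hdot, ?_⟩
  rw [hvecP]
  exact tendsto_iff_norm_sub_tendsto_zero.mpr hEtend
end
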